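/- arXiv:1503.01519 — 3 statements merged into one kernel-verified Lean document; each statement's English description precedes it below -/
import Mathlib

section
/- Let Ω ⊆ ℂ be a hyperbolic domain. Then for every z ∈ Ω one has d_Ω(z) ≥ ε_Ω(z)·(1+|z|²) / (1 + ε_Ω(z)·|z|). -/
open Set Metric
open scoped Classical

/-- The quantity `τ(z,w) = |z-w| / |1 + z·conj w|`, valued in `ℝ≥0∞` so that
antipodal pairs (where the denominator vanishes) get the value `∞`. -/
noncomputable def tauE (z w : ℂ) : ENNReal :=
  ENNReal.ofReal ‖z - w‖ / ENNReal.ofReal ‖1 + z * (starRingEnd ℂ) w‖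

/-- `ε_Ω(z)`: the infimum of `τ(z,a)` over the boundary of `Ω` in the Riemann sphere,
i.e. over the frontier of `Ω` in `ℂ`, together with `∞` (where `τ(z,∞) = 1/|z|`)
when `Ω` is unbounded. -/
noncomputable def epsOm (Ω : Set ℂ) (z : ℂ) : ℝ :=
  ((⨅ a ∈ frontier Ω, tauE z a) ⊓
    (if Bornology.IsBounded Ω then ⊤ else 1 / ENNReal.ofReal ‖z‖)).toReal

/-- A domain in `ℂ` is hyperbolic if it is open, connected,
and its complement contains at least two points. -/
def IsHyperbolicDomain (Ω : Set ℂ) : Prop :=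
  IsOpen Ω ∧ IsConnected Ω ∧ Set.Nontrivial Ωᶜ

theorem dist_ge_eps_lower_bound (Ω : Set ℂ) (hΩ : IsHyperbolicDomain Ω) (z : ℂ) (hz : z ∈ Ω) :
    epsOm Ω z * (1 + ‖z‖ ^ 2) / (1 + epsOm Ω z * ‖z‖) ≤
      Metric.infDist z (frontier Ω) := by
  obtain ⟨hO, hC, hNT⟩ := hΩ
  have hfr : (frontier Ω).Nonempty := by
    by_contra h
    rw [Set.not_nonempty_iff_eq_empty] at h
    have hclopen : IsClopen Ω := isClopen_iff_frontier_eq_empty.mpr h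
    rcases isClopen_iff.mp hclopen with h1 | h1
    · exact absurd (h1 ▸ hz) (Set.notMem_empty z)
    · obtain ⟨a, ha, b, hb, hab⟩ := hNT
      exact ha (h1 ▸ Set.mem_univ a)
  obtain ⟨a, haf, hda⟩ := IsClosed.exists_infDist_eq_dist isClosed_frontier hfr z
  set ε := epsOm Ω z with hεdef
  set r := dist z a with hrdef
  set D := ‖1 + z * (starRingEnd ℂ) a‖ with hDdef
  have hε0 : 0 ≤ ε := ENNReal.toReal_nonneg
  have hr0 : 0 ≤ r := dist_nonneg
  have hzabs : (0:ℝ) ≤ ‖z‖ := norm_nonneg z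
  have hrabs : r = ‖z - a‖ := Complex.dist_eq z a
  have key : ε * D ≤ r := by
    rcases eq_or_lt_of_le (norm_nonneg (1 + z * (starRingEnd ℂ) a)) with hD | hD
    · rw [← hDdef] at hD
      rw [← hD, mul_zero]
      exact hr0
    · set E := ((⨅ a ∈ frontier Ω, tauE z a) ⊓
        (if Bornology.IsBounded Ω then ⊤ else 1 / ENNReal.ofReal ‖z‖)) with hE
      have hle : E ≤ tauE z a := le_trans inf_le_left (biInf_le _ haf)
      have htau : tauE z a = ENNReal.ofReal (‖z - a‖ / D) := by
        rw [tauE, ← hDdef, ENNReal.ofReal_div_of_pos hD]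
      have hεle : ε ≤ ‖z - a‖ / D := by
        have := ENNReal.toReal_mono ENNReal.ofReal_ne_top (htau ▸ hle)
        rwa [ENNReal.toReal_ofReal (by positivity)] at this
      calc ε * D ≤ (‖z - a‖ / D) * D := by
              exact mul_le_mul_of_nonneg_right hεle (le_of_lt hD)
        _ = ‖z - a‖ := div_mul_cancel₀ _ (ne_of_gt hD)
        _ = r := hrabs.symm
  have tri : 1 + ‖z‖ ^ 2 ≤ D + ‖z‖ * r := by
    have h1 : (1 : ℂ) + z * (starRingEnd ℂ) z =
        (1 + z * (starRingEnd ℂ) a) + z * ((starRingEnd ℂ) z - (starRingEnd ℂ) a) := by ring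
    have h2 : ‖1 + z * (starRingEnd ℂ) z‖ = 1 + ‖z‖ ^ 2 := by
      rw [Complex.mul_conj]
      rw [show ((1:ℂ) + (Complex.normSq z : ℂ)) = ((1 + Complex.normSq z : ℝ) : ℂ) by push_cast; ring]
      rw [Complex.norm_real, Real.norm_eq_abs, abs_of_nonneg (by linarith [Complex.normSq_nonneg z]), Complex.sq_norm]
    calc 1 + ‖z‖ ^ 2 = ‖1 + z * (starRingEnd ℂ) z‖ := h2.symm
      _ ≤ D + ‖z * ((starRingEnd ℂ) z - (starRingEnd ℂ) a)‖ := by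
          rw [h1]; exact norm_add_le _ _
      _ = D + ‖z‖ * r := by
          rw [norm_mul, show (starRingEnd ℂ) z - (starRingEnd ℂ) a = (starRingEnd ℂ) (z - a) by
            simp [map_sub], Complex.norm_conj, ← hrabs]
  rw [div_le_iff₀ (by positivity), hda]
  nlinarith [mul_le_mul_of_nonneg_left tri hε0, key, mul_nonneg (mul_nonneg hε0 hzabs) hr0]
end

section
/- For R > 0 let 𝔻_R = {z ∈ ℂ : |z| < R}. Then inf_{w∈𝔻_R} ε_{𝔻_R}(w) · (1+|w|²) · R/(R²−|w|²) equals 1/2 if R ≤ 1, and equals 2R/(1+R)² (which is < 1/2) if R > 1. -/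
open Set Metric
open scoped Classical

/-- `ε` for the disk `{z : |z| < R}`: the infimum of `τ(w,a)` over the circle `|a| = R`. -/
noncomputable def epsDR (R : ℝ) (w : ℂ) : ℝ :=
  (⨅ a ∈ Metric.sphere (0 : ℂ) R, tauE w a).toReal

lemma key_ineq {R : ℝ} (hR : 0 < R) {w a : ℂ} (hw : ‖w‖ < R)
    (ha : ‖a‖ = R) :
    (R - ‖w‖) * ‖1 + w * (starRingEnd ℂ) a‖
      ≤ ‖w - a‖ * (1 + ‖w‖ * R) := by
  set r := ‖w‖ with hr
  have hr0 : 0 ≤ r := norm_nonneg w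
  have ht : (w * (starRingEnd ℂ) a).re ≤ r * R := by
    calc (w * (starRingEnd ℂ) a).re ≤ ‖w * (starRingEnd ℂ) a‖ := Complex.re_le_norm _
    _ = r * R := by rw [norm_mul, Complex.norm_conj, ha]
  apply le_of_pow_le_pow_left₀ two_ne_zero (by positivity)
  have h1 : ‖1 + w * (starRingEnd ℂ) a‖ ^ 2
      = 1 + 2 * (w * (starRingEnd ℂ) a).re + r ^ 2 * R ^ 2 := by
    rw [Complex.sq_norm, Complex.normSq_add]
    have : Complex.normSq (w * (starRingEnd ℂ) a) = r ^ 2 * R ^ 2 := by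
      rw [← Complex.sq_norm, norm_mul, Complex.norm_conj, ha, mul_pow]
    rw [this]
    simp [Complex.normSq_one]
    ring
  have h2 : ‖w - a‖ ^ 2 = r ^ 2 + R ^ 2 - 2 * (w * (starRingEnd ℂ) a).re := by
    rw [Complex.sq_norm, Complex.normSq_sub, ← Complex.sq_norm, ← Complex.sq_norm, ha]
  have hd2 := h1
  nlinarith [sq_nonneg (R - r), mul_nonneg (sub_nonneg.2 ht)
    (by positivity : (0:ℝ) ≤ (1 + r * R) ^ 2 + (R - r) ^ 2)]

lemma epsDR_eq {R : ℝ} (hR : 0 < R) {w : ℂ} (hw : ‖w‖ < R) :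
    epsDR R w = (R - ‖w‖) / (1 + ‖w‖ * R) := by
  set r := ‖w‖ with hr
  have hr0 : 0 ≤ r := norm_nonneg w
  have hden : (0:ℝ) < 1 + r * R := by positivity
  -- witness on the sphere
  obtain ⟨a₀, ha₀, hnum, hden0⟩ : ∃ a₀, a₀ ∈ Metric.sphere (0:ℂ) R ∧
      ‖w - a₀‖ = R - r ∧ ‖1 + w * (starRingEnd ℂ) a₀‖ = 1 + r * R := by
    rcases eq_or_ne w 0 with h0 | h0
    · refine ⟨(R:ℂ), ?_, ?_, ?_⟩
      · simp [abs_of_pos hR]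
      · simp [h0, hr, abs_of_pos hR]
      · simp [h0, hr]
    · have hrpos : 0 < r := norm_pos_iff.2 h0
      refine ⟨((R / r : ℝ) : ℂ) * w, ?_, ?_, ?_⟩
      · simp only [Metric.mem_sphere, dist_zero_right, norm_mul,
          Complex.norm_real, Real.norm_eq_abs, ← hr]
        rw [abs_of_pos (by positivity)]
        field_simp
      · have : w - ((R / r : ℝ) : ℂ) * w = ((1 - R / r : ℝ) : ℂ) * w := by
          push_cast; ring
        rw [this, norm_mul, Complex.norm_real, Real.norm_eq_abs, ← hr, abs_of_nonpos (by
          rw [sub_nonpos, le_div_iff₀ hrpos, one_mul]; exact hw.le)]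
        field_simp
        ring
      · have : (1 : ℂ) + w * (starRingEnd ℂ) (((R / r : ℝ) : ℂ) * w)
            = ((1 + (R / r) * (r^2) : ℝ) : ℂ) := by
          rw [map_mul, Complex.conj_ofReal]
          have : w * (((R / r : ℝ) : ℂ) * (starRingEnd ℂ) w)
              = ((R / r : ℝ) : ℂ) * (w * (starRingEnd ℂ) w) := by ring
          rw [this, Complex.mul_conj]
          push_cast [← Complex.sq_norm, ← hr]
          ring
        rw [this, Complex.norm_real, Real.norm_eq_abs, abs_of_pos (by positivity)]
        field_simp
  have hiInf : (⨅ a ∈ Metric.sphere (0 : ℂ) R, tauE w a)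
      = ENNReal.ofReal ((R - r) / (1 + r * R)) := by
    apply le_antisymm
    · refine iInf₂_le_of_le a₀ ha₀ (le_of_eq ?_)
      rw [tauE, hnum, hden0, ENNReal.ofReal_div_of_pos hden]
    · refine le_iInf₂ fun a ha => ?_
      have haR : ‖a‖ = R := by
        simpa using ha
      have hwa : w ≠ a := fun h => by
        have : r = R := by rw [hr, h, haR]
        exact absurd hw (by rw [this]; exact lt_irrefl _)
      rcases eq_or_lt_of_le (norm_nonneg (1 + w * (starRingEnd ℂ) a)) with hd | hd
      · rw [tauE, ← hd, ENNReal.ofReal_zero, ENNReal.div_zero]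
        · exact le_top
        · simp only [ne_eq, ENNReal.ofReal_eq_zero, not_le]
          exact norm_pos_iff.2 (sub_ne_zero.2 hwa)
      · rw [tauE, ← ENNReal.ofReal_div_of_pos hd]
        apply ENNReal.ofReal_le_ofReal
        rw [div_le_div_iff₀ hden hd]
        exact key_ineq hR hw haR
  rw [epsDR, hiInf, ENNReal.toReal_ofReal (div_nonneg (by linarith) hden.le)]

lemma val_eq {R : ℝ} (hR : 0 < R) {w : ℂ} (hw : ‖w‖ < R) :
    epsDR R w * ((1 + ‖w‖ ^ 2) * (R / (R ^ 2 - ‖w‖ ^ 2)))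
      = R * (1 + ‖w‖ ^ 2) / ((1 + ‖w‖ * R) * (R + ‖w‖)) := by
  rw [epsDR_eq hR hw]
  set r := ‖w‖ with hr
  have hr0 : 0 ≤ r := norm_nonneg w
  have h1 : (1 : ℝ) + r * R ≠ 0 := by positivity
  have h2 : R + r ≠ 0 := by positivity
  have h3 : R ^ 2 - r ^ 2 ≠ 0 := by nlinarith
  field_simp
  ring

theorem hatC_disk (R : ℝ) (hR : 0 < R) :
    (sInf ((fun w => epsDR R w * ((1 + ‖w‖ ^ 2) * (R / (R ^ 2 - ‖w‖ ^ 2)))) ''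
        ball (0 : ℂ) R) = if R ≤ 1 then 1 / 2 else 2 * R / (1 + R) ^ 2) ∧
      (1 < R → 2 * R / (1 + R) ^ 2 < 1 / 2) := by
  constructor
  · by_cases hR1 : R ≤ 1
    · rw [if_pos hR1]
      apply csInf_eq_of_forall_ge_of_forall_gt_exists_lt
      · exact ⟨_, ⟨0, by simpa using hR, rfl⟩⟩
      · rintro s ⟨w, hw, rfl⟩
        have hw' : ‖w‖ < R := by simpa using mem_ball_zero_iff.1 hw
        dsimp only
        rw [val_eq hR hw']
        set r := ‖w‖ with hr
        have hr0 : 0 ≤ r := norm_nonneg w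
        have hrR : r * R ≤ 1 := by nlinarith
        rw [le_div_iff₀ (by positivity)]
        nlinarith [mul_nonneg (by linarith : (0:ℝ) ≤ R - r) (by linarith : (0:ℝ) ≤ 1 - r * R)]
      · intro u hu
        set ε := u - 1/2 with hε
        have hε0 : 0 < ε := by simp [hε]; linarith
        set δ := min (R/2) (R*ε) with hδ
        have hδ0 : 0 < δ := lt_min (by positivity) (by positivity)
        have hδ1 : δ ≤ R/2 := min_le_left _ _
        have hδ2 : δ ≤ R*ε := min_le_right _ _
        set r := R - δ with hrdef
        have hr0 : 0 < r := by simp [hrdef]; linarith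
        have hrR : r < R := by simp [hrdef]; linarith
        have habs : ‖(r : ℂ)‖ = r := by
          rw [Complex.norm_real, Real.norm_eq_abs, abs_of_pos hr0]
        refine ⟨_, ⟨(r : ℂ), ?_, rfl⟩, ?_⟩
        · rw [mem_ball_zero_iff, habs]; exact hrR
        · dsimp only
          rw [val_eq hR (by rw [habs]; exact hrR), habs]
          have hrRle : r * R ≤ 1 := by nlinarith
          have step1 : R * (1 + r ^ 2) / ((1 + r * R) * (R + r)) ≤ 1/2 + δ/(2*R) := by
            rw [div_le_iff₀ (by positivity)]
            have expand : (1/2 + δ/(2*R)) * ((1 + r * R) * (R + r))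
                = ((R + δ) * ((1 + r * R) * (R + r))) / (2*R) := by
              field_simp
            rw [expand, le_div_iff₀ (by positivity)]
            have hδr : δ = R - r := by rw [hrdef]; ring
            have hkey : 0 ≤ r * (R - r) * (1 + R * (2*R + r)) := by
              have hp : (0:ℝ) ≤ 1 + R * (2*R + r) := by nlinarith
              exact mul_nonneg (mul_nonneg hr0.le (by linarith)) hp
            rw [hδr]
            nlinarith [hkey]
          have step2 : δ/(2*R) ≤ ε/2 := by
            rw [div_le_div_iff₀ (by positivity) two_pos]; nlinarith
          linarith
    · push_neg at hR1
      rw [if_neg (not_le.2 hR1)]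
      apply IsLeast.csInf_eq
      constructor
      · refine ⟨(1 : ℂ), ?_, ?_⟩
        · rw [mem_ball_zero_iff]; simpa using hR1
        · have h1 : ‖(1 : ℂ)‖ = 1 := norm_one
          dsimp only
          rw [val_eq hR (by rw [h1]; exact hR1), h1]
          have : (0:ℝ) < 1 + R := by linarith
          field_simp
          ring
      · rintro s ⟨w, hw, rfl⟩
        have hw' : ‖w‖ < R := by simpa using mem_ball_zero_iff.1 hw
        dsimp only
        rw [val_eq hR hw']
        set r := ‖w‖ with hr
        have hr0 : 0 ≤ r := norm_nonneg w
        rw [div_le_div_iff₀ (by positivity) (by positivity)]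
        nlinarith [mul_nonneg (mul_nonneg hR.le (by positivity : (0:ℝ) ≤ 1 + R^2))
          (sq_nonneg (1 - r))]
  · intro h
    rw [div_lt_iff₀ (by positivity)]
    nlinarith [sq_nonneg (R - 1)]
end

section
/- For 0 < R and w ∈ ℂ with |w| < R, one has ε_{𝔻_R}(w) = (R−|w|)/(1+R|w|) and δ_{𝔻_R}(w) = (R−|w|)/√((1+R²)(1+|w|²)); that is, the infima of τ(w,a) and σ(w,a) over the circle |a| = R are attained and equal σ and τ evaluated at the radially nearest boundary point. -/
open Set Metric
open scoped Classical

/-- The chordal (spherical) distance `σ(z,w) = |z-w| / √((1+|z|²)(1+|w|²))`. -/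
noncomputable def sph (z w : ℂ) : ℝ :=
  ‖z - w‖ / Real.sqrt ((1 + ‖z‖ ^ 2) * (1 + ‖w‖ ^ 2))

/-- `δ` for the disk `{z : |z| < R}`: the infimum of `σ(w,a)` over the circle `|a| = R`. -/
noncomputable def deltaDR (R : ℝ) (w : ℂ) : ℝ :=
  sInf ((fun a => sph w a) '' Metric.sphere (0 : ℂ) R)

/-- The radially nearest boundary point. -/
noncomputable def nearPt (R : ℝ) (w : ℂ) : ℂ :=
  if w = 0 then (R : ℂ) else ((R / ‖w‖ : ℝ) : ℂ) * w

lemma nearPt_mem (R : ℝ) (hR : 0 < R) (w : ℂ) :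
    nearPt R w ∈ Metric.sphere (0 : ℂ) R := by
  rw [mem_sphere_zero_iff_norm]
  unfold nearPt
  split_ifs with h
  · simp [abs_of_pos hR]
  · have hw0 : ‖w‖ ≠ 0 := by simpa using h
    simp only [norm_mul, Complex.norm_real, Real.norm_eq_abs]
    rw [abs_of_nonneg (by positivity)]
    field_simp

lemma nearPt_abs_sub (R : ℝ) (hR : 0 < R) (w : ℂ) (hw : ‖w‖ < R) :
    ‖w - nearPt R w‖ = R - ‖w‖ := by
  unfold nearPt
  split_ifs with h
  · simp [h, abs_of_pos hR]
  · have hw0 : (0:ℝ) < ‖w‖ := by simpa [norm_pos_iff] using h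
    have : w - ((R / ‖w‖ : ℝ) : ℂ) * w = ((1 - R / ‖w‖ : ℝ) : ℂ) * w := by
      push_cast; ring
    rw [this, norm_mul, Complex.norm_real, Real.norm_eq_abs]
    rw [abs_of_nonpos (by rw [sub_nonpos, le_div_iff₀ hw0]; nlinarith)]
    field_simp
    ring

lemma nearPt_denom (R : ℝ) (hR : 0 < R) (w : ℂ) :
    ‖1 + w * (starRingEnd ℂ) (nearPt R w)‖ = 1 + R * ‖w‖ := by
  unfold nearPt
  split_ifs with h
  · simp [h]
  · have hw0 : (0:ℝ) < ‖w‖ := by simpa [norm_pos_iff] using h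
    have key : w * (starRingEnd ℂ) (((R / ‖w‖ : ℝ) : ℂ) * w)
        = ((R * ‖w‖ : ℝ) : ℂ) := by
      rw [map_mul, Complex.conj_ofReal]
      have h2 : w * (((R / ‖w‖ : ℝ) : ℂ) * (starRingEnd ℂ) w)
          = ((R / ‖w‖ : ℝ) : ℂ) * (w * (starRingEnd ℂ) w) := by ring
      rw [h2, Complex.mul_conj]
      rw [Complex.normSq_eq_norm_sq]
      have hc : ((‖w‖ : ℝ) : ℂ) ≠ 0 := by exact_mod_cast hw0.ne'
      push_cast
      field_simp
    rw [key]
    have h3 : (1 : ℂ) + ((R * ‖w‖ : ℝ) : ℂ) = ((1 + R * ‖w‖ : ℝ) : ℂ) := by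
      push_cast; ring
    rw [h3, Complex.norm_real, Real.norm_eq_abs, abs_of_pos (by positivity)]

lemma abs_sub_lower (R : ℝ) (w a : ℂ) (ha : a ∈ Metric.sphere (0 : ℂ) R) :
    R - ‖w‖ ≤ ‖w - a‖ := by
  rw [mem_sphere_zero_iff_norm] at ha
  have h1 := norm_sub_norm_le a w
  rw [norm_sub_rev] at h1
  linarith

theorem eps_delta_disk_formulas (R : ℝ) (hR : 0 < R) (w : ℂ) (hw : ‖w‖ < R) :
    epsDR R w = (R - ‖w‖) / (1 + R * ‖w‖) ∧
      deltaDR R w =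
        (R - ‖w‖) / Real.sqrt ((1 + R ^ 2) * (1 + ‖w‖ ^ 2)) := by
  set r := ‖w‖ with hr
  have hr0 : 0 ≤ r := norm_nonneg w
  have h1 : (0:ℝ) < 1 + R * r := by positivity
  have hRr : 0 ≤ R - r := by linarith
  have hmem := nearPt_mem R hR w
  constructor
  · -- ε part
    have key : (⨅ a ∈ Metric.sphere (0 : ℂ) R, tauE w a)
        = ENNReal.ofReal ((R - r) / (1 + R * r)) := by
      apply le_antisymm
      · calc (⨅ a ∈ Metric.sphere (0 : ℂ) R, tauE w a) ≤ tauE w (nearPt R w) :=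
              biInf_le _ hmem
          _ = ENNReal.ofReal ((R - r) / (1 + R * r)) := by
              unfold tauE
              rw [nearPt_abs_sub R hR w hw, nearPt_denom R hR w,
                ENNReal.ofReal_div_of_pos h1]
      · refine le_iInf₂ fun a ha => ?_
        unfold tauE
        have hx : (0:ℝ) < ‖w - a‖ :=
          lt_of_lt_of_le (by linarith) (abs_sub_lower R w a ha)
        rw [ENNReal.le_div_iff_mul_le (Or.inr (by simp only [ne_eq, ENNReal.ofReal_eq_zero, not_le]; exact hx)) (Or.inl (by simp))]
        rw [← ENNReal.ofReal_mul (by positivity)]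
        apply ENNReal.ofReal_le_ofReal
        have hden : ‖1 + w * (starRingEnd ℂ) a‖ ≤ 1 + R * r := by
          have hha : ‖a‖ = R := by
            rw [mem_sphere_zero_iff_norm] at ha
            simpa using ha
          calc ‖1 + w * (starRingEnd ℂ) a‖
              ≤ ‖(1:ℂ)‖ + ‖w * (starRingEnd ℂ) a‖ := norm_add_le _ _
            _ = 1 + r * R := by simp [map_mul, hha, hr]
            _ = 1 + R * r := by ring
        calc (R - r) / (1 + R * r) * ‖1 + w * (starRingEnd ℂ) a‖
            ≤ (R - r) / (1 + R * r) * (1 + R * r) := by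
              apply mul_le_mul_of_nonneg_left hden (by positivity)
          _ = R - r := by field_simp
          _ ≤ ‖w - a‖ := abs_sub_lower R w a ha
    unfold epsDR
    rw [key, ENNReal.toReal_ofReal (by positivity)]
  · -- δ part
    set D := Real.sqrt ((1 + R ^ 2) * (1 + r ^ 2)) with hD
    have hD0 : 0 < D := Real.sqrt_pos.mpr (by positivity)
    have hval : ∀ a ∈ Metric.sphere (0 : ℂ) R,
        sph w a = ‖w - a‖ / D := by
      intro a ha
      have hha : ‖a‖ = R := by
        rw [mem_sphere_zero_iff_norm] at ha
        simpa using ha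
      unfold sph
      rw [hha, hD, mul_comm (1 + R ^ 2)]
    have hlb : ∀ x ∈ (fun a => sph w a) '' Metric.sphere (0 : ℂ) R, (R - r) / D ≤ x := by
      rintro x ⟨a, ha, rfl⟩
      show (R - r) / D ≤ sph w a
      rw [hval a ha]
      gcongr
      exact abs_sub_lower R w a ha
    have hmem' : (R - r) / D ∈ (fun a => sph w a) '' Metric.sphere (0 : ℂ) R := by
      refine ⟨nearPt R w, hmem, ?_⟩
      show sph w (nearPt R w) = (R - r) / D
      rw [hval _ hmem, nearPt_abs_sub R hR w hw]
    unfold deltaDR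
    exact le_antisymm (csInf_le ⟨_, hlb⟩ hmem') (le_csInf ⟨_, hmem'⟩ hlb)
end
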